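/- Let p be an odd prime, n ≥ m ≥ 2, G = ⟨x⟩ × ⟨y⟩ ≅ Z_{p^n} × Z_{p^m}, x₀ = x^{p^{n-1}}, y₀ = y^{p^{m-1}}, and α the automorphism of G sending x ↦ x·y₀ and y ↦ y·x₀. Then α fixes both x₀ and y₀, x^{α^i} = x·y₀^i and y^{α^i} = y·x₀^i for all i, α has order p, and the set S = {x^{α^i}, y^{α^i}, (xy⁻¹)^{α^i} : i ∈ ℤ} has cardinality 3p. -/

import Mathlib

/-- The automorphism group of a digraph given by an adjacency relation. -/
def dAut {V : Type*} (adj : V → V → Prop) : Subgroup (Equiv.Perm V) where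
  carrier := {σ | ∀ u v : V, adj (σ u) (σ v) ↔ adj u v}
  one_mem' := by intro u v; rfl
  mul_mem' := by
    intro a b ha hb u v
    simp only [Set.mem_setOf_eq] at *
    rw [Equiv.Perm.mul_apply, Equiv.Perm.mul_apply, ha, hb]
  inv_mem' := by
    intro a ha u v
    simpa using (ha (a⁻¹ u) (a⁻¹ v)).symm

/-- Adjacency of the Cayley digraph `Cay(G,S)`. -/
def cayAdj (G : Type*) [Group G] (S : Set G) : G → G → Prop :=
  fun u v => v * u⁻¹ ∈ S

/-- The right regular representation of `G` in `Equiv.Perm G`. -/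
def rightReg (G : Type*) [Group G] : G →* Equiv.Perm G where
  toFun g := Equiv.mulRight g⁻¹
  map_one' := by ext x; simp
  map_mul' := by intro a b; ext x; simp [mul_assoc]

/-- The right regular representation of `G` as a subgroup of `Aut(Cay(G,S))`. -/
def cayleyRR (G : Type*) [Group G] (S : Set G) :
    Subgroup (dAut (cayAdj G S)) :=
  ((rightReg G).range).subgroupOf (dAut (cayAdj G S))

/-- A subgroup of `Equiv.Perm V` is regular if it is sharply transitive on `V`. -/
def IsRegularSub {V : Type*} (H : Subgroup (Equiv.Perm V)) : Prop :=
  ∀ v w : V, ∃! h : H, (h : Equiv.Perm V) v = w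

/-- Adjacency of the cartesian product of two digraphs. -/
def cartAdj {α β : Type*} (adjG : α → α → Prop) (adjD : β → β → Prop) :
    α × β → α × β → Prop :=
  fun u v => (u.1 = v.1 ∧ adjD u.2 v.2) ∨ (u.2 = v.2 ∧ adjG u.1 v.1)

/-- `pathLe adj i u v` : there is a directed path of length at most `i` from `u` to `v`. -/
def pathLe {V : Type*} (adj : V → V → Prop) : ℕ → V → V → Prop
  | 0, u, v => u = v
  | (n+1), u, v => pathLe adj n u v ∨ ∃ w, pathLe adj n u w ∧ adj w v

/-- For `G ≅ Z_{p^n} × Z_{p^m}` (`n ≥ m ≥ 2`) and the automorphism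
`α : (x,y) ↦ (x·y₀, y·x₀)`, `α` fixes `x₀` and `y₀`, the stated power formulas
hold, `α` has order `p`, and the connection set
`S = {x^{α^i}, y^{α^i}, (xy⁻¹)^{α^i} : i ∈ ℤ}` has cardinality `3p`. -/
theorem stmt_13 {G : Type*} [CommGroup G] [Fintype G] (p n m : ℕ) (hp : p.Prime)
    (hodd : Odd p) (hm : 2 ≤ m) (hnm : m ≤ n)
    (hcard : Nat.card G = p ^ (n + m))
    (x y : G) (hx : orderOf x = p ^ n) (hy : orderOf y = p ^ m)
    (hgen : Subgroup.closure {x, y} = ⊤)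
    (x₀ y₀ : G) (hx₀ : x₀ = x ^ p ^ (n - 1)) (hy₀ : y₀ = y ^ p ^ (m - 1))
    (α : G ≃* G) (hαx : α x = x * y₀) (hαy : α y = y * x₀) :
    α x₀ = x₀ ∧ α y₀ = y₀ ∧
    (∀ i : ℕ, (α ^ i) x = x * y₀ ^ i ∧ (α ^ i) y = y * x₀ ^ i) ∧
    orderOf α = p ∧
    {g : G | ∃ i : ℤ, g = (α ^ i) x ∨ g = (α ^ i) y ∨
      g = (α ^ i) (x * y⁻¹)}.ncard = 3 * p := by
  haveI : Fact p.Prime := ⟨hp⟩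
  haveI : NeZero p := ⟨hp.ne_zero⟩
  haveI : NeZero (p ^ n) := ⟨pow_ne_zero _ hp.ne_zero⟩
  haveI : NeZero (p ^ m) := ⟨pow_ne_zero _ hp.ne_zero⟩
  have hn : 2 ≤ n := hm.trans hnm
  -- basic power facts
  have hy₀p : y₀ ^ p = 1 := by
    rw [hy₀, ← pow_mul, ← pow_succ, Nat.sub_add_cancel (by omega), ← hy, pow_orderOf_eq_one]
  have hx₀p : x₀ ^ p = 1 := by
    rw [hx₀, ← pow_mul, ← pow_succ, Nat.sub_add_cancel (by omega), ← hx, pow_orderOf_eq_one]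
  have hy₀ne : y₀ ≠ 1 := by
    rw [hy₀]
    intro h
    have := orderOf_dvd_of_pow_eq_one h
    rw [hy, Nat.pow_dvd_pow_iff_le_right hp.one_lt] at this
    omega
  have hppow : ∀ k : ℕ, 1 ≤ k → ∀ g : G, g ^ p = 1 → g ^ p ^ k = 1 := by
    intro k hk g hg
    obtain ⟨c, hc⟩ := dvd_pow_self p (Nat.one_le_iff_ne_zero.mp hk)
    rw [hc, pow_mul, hg, one_pow]
  -- claim 1 and 2
  have hα_x₀ : α x₀ = x₀ := by
    calc α x₀ = (x * y₀) ^ p ^ (n - 1) := by rw [hx₀, map_pow, hαx]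
    _ = x₀ * y₀ ^ p ^ (n - 1) := by rw [mul_pow, hx₀]
    _ = x₀ := by rw [hppow (n-1) (by omega) y₀ hy₀p, mul_one]
  have hα_y₀ : α y₀ = y₀ := by
    calc α y₀ = (y * x₀) ^ p ^ (m - 1) := by rw [hy₀, map_pow, hαy]
    _ = y₀ * x₀ ^ p ^ (m - 1) := by rw [mul_pow, hy₀]
    _ = y₀ := by rw [hppow (m-1) (by omega) x₀ hx₀p, mul_one]
  -- natural power formulas
  have hnat : ∀ i : ℕ, (α ^ i) x = x * y₀ ^ i ∧ (α ^ i) y = y * x₀ ^ i := by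
    intro i
    induction i with
    | zero => simp
    | succ k ih =>
      have h1 : (α ^ (k+1)) x = (α ^ k) (α x) := by rw [pow_succ]; rfl
      have h2 : (α ^ (k+1)) y = (α ^ k) (α y) := by rw [pow_succ]; rfl
      have hfix : ∀ j : ℕ, (α ^ j) y₀ = y₀ ∧ (α ^ j) x₀ = x₀ := by
        intro j
        induction j with
        | zero => simp
        | succ l ihl =>
          constructor
          · rw [pow_succ]
            show (α ^ l) (α y₀) = y₀
            rw [hα_y₀, ihl.1]
          · rw [pow_succ]
            show (α ^ l) (α x₀) = x₀
            rw [hα_x₀, ihl.2]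
      constructor
      · rw [h1, hαx, map_mul, ih.1, (hfix k).1, pow_succ, mul_assoc]
      · rw [h2, hαy, map_mul, ih.2, (hfix k).2, pow_succ, mul_assoc]
  -- order of α
  have hαp : α ^ p = 1 := by
    ext g
    have hg : g ∈ Subgroup.closure ({x, y} : Set G) := hgen ▸ Subgroup.mem_top g
    obtain ⟨a, b, rfl⟩ := Subgroup.mem_closure_pair.mp hg
    show (α ^ p) (x ^ a * y ^ b) = x ^ a * y ^ b
    rw [map_mul, map_zpow, map_zpow, (hnat p).1, (hnat p).2, hy₀p, hx₀p, mul_one, mul_one]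
  have hordα : orderOf α = p := by
    refine orderOf_eq_prime hαp ?_
    intro h
    have : α x = x := by rw [h]; rfl
    rw [hαx] at this
    exact hy₀ne (by simpa using this)
  -- key independence lemma
  have key : ∀ a b : ℤ, x ^ a * y ^ b = 1 → ((p:ℤ)^n ∣ a ∧ (p:ℤ)^m ∣ b) := by
    set f : ZMod (p ^ n) × ZMod (p ^ m) → G :=
      fun ab => x ^ (ab.1.val : ℤ) * y ^ (ab.2.val : ℤ) with hf
    have hredgen : ∀ (q : ℕ) (_ : NeZero q) (g : G), orderOf g ∣ q → ∀ a : ℤ,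
        g ^ a = g ^ (((a : ZMod q)).val : ℤ) := by
      intro q hq g hg a
      rw [zpow_eq_zpow_iff_modEq]
      have h1 : a ≡ ((a : ZMod q).val : ℤ) [ZMOD (q:ℕ)] :=
        (ZMod.intCast_eq_intCast_iff _ _ _).mp
          (by push_cast; simp [ZMod.natCast_val, ZMod.cast_id])
      exact h1.of_dvd (Int.natCast_dvd_natCast.mpr hg)
    have hfeq : ∀ a b : ℤ, x ^ a * y ^ b = f ((a : ZMod (p^n)), (b : ZMod (p^m))) := by
      intro a b
      simp only [hf]
      rw [← hredgen (p^n) ‹_› x (by rw [hx]) a, ← hredgen (p^m) ‹_› y (by rw [hy]) b]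
    have hsurj : Function.Surjective f := by
      intro g
      have hg : g ∈ Subgroup.closure ({x, y} : Set G) := hgen ▸ Subgroup.mem_top g
      obtain ⟨a, b, hab⟩ := Subgroup.mem_closure_pair.mp hg
      exact ⟨((a : ZMod (p^n)), (b : ZMod (p^m))), by rw [← hfeq, hab]⟩
    have hbij : Function.Bijective f := by
      rw [Fintype.bijective_iff_surjective_and_card]
      refine ⟨hsurj, ?_⟩
      rw [Fintype.card_prod, ZMod.card, ZMod.card, ← pow_add, ← hcard,
        Nat.card_eq_fintype_card]
    intro a b hab
    have h0 : f ((a : ZMod (p^n)), (b : ZMod (p^m))) = f (((0:ℤ) : ZMod (p^n)), ((0:ℤ) : ZMod (p^m))) := by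
      rw [← hfeq, ← hfeq, hab]
      simp
    have := hbij.1 h0
    rw [Prod.mk.injEq] at this
    constructor
    · have := (ZMod.intCast_zmod_eq_zero_iff_dvd a (p^n)).mp (by rw [this.1]; simp)
      push_cast at this
      exact this
    · have := (ZMod.intCast_zmod_eq_zero_iff_dvd b (p^m)).mp (by rw [this.2]; simp)
      push_cast at this
      exact this
  -- inverse formulas
  have hinv_y₀ : α⁻¹ y₀ = y₀ := by
    show α.symm y₀ = y₀
    rw [MulEquiv.symm_apply_eq, hα_y₀]
  have hinv_x₀ : α⁻¹ x₀ = x₀ := by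
    show α.symm x₀ = x₀
    rw [MulEquiv.symm_apply_eq, hα_x₀]
  have hinv_x : α⁻¹ x = x * y₀⁻¹ := by
    show α.symm x = x * y₀⁻¹
    rw [MulEquiv.symm_apply_eq, map_mul, hαx, map_inv, hα_y₀, mul_assoc,
      mul_inv_cancel, mul_one]
  have hinv_y : α⁻¹ y = y * x₀⁻¹ := by
    show α.symm y = y * x₀⁻¹
    rw [MulEquiv.symm_apply_eq, map_mul, hαy, map_inv, hα_x₀, mul_assoc,
      mul_inv_cancel, mul_one]
  -- integer fixed points
  have hzfix : ∀ i : ℤ, (α ^ i) y₀ = y₀ ∧ (α ^ i) x₀ = x₀ := by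
    intro i
    induction i using Int.induction_on with
    | zero => simp
    | succ k ih =>
      rw [zpow_add_one]
      exact ⟨by show (α ^ (k:ℤ)) (α y₀) = y₀; rw [hα_y₀, ih.1],
        by show (α ^ (k:ℤ)) (α x₀) = x₀; rw [hα_x₀, ih.2]⟩
    | pred k ih =>
      rw [zpow_sub_one]
      exact ⟨by show (α ^ (-k:ℤ)) (α⁻¹ y₀) = y₀; rw [hinv_y₀, ih.1],
        by show (α ^ (-k:ℤ)) (α⁻¹ x₀) = x₀; rw [hinv_x₀, ih.2]⟩
  -- integer power formulas
  have hzx : ∀ i : ℤ, (α ^ i) x = x * y₀ ^ i ∧ (α ^ i) y = y * x₀ ^ i := by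
    intro i
    induction i using Int.induction_on with
    | zero => simp
    | succ k ih =>
      rw [zpow_add_one]
      constructor
      · show (α ^ (k:ℤ)) (α x) = x * y₀ ^ ((k:ℤ)+1)
        rw [hαx, map_mul, ih.1, (hzfix (k:ℤ)).1, mul_assoc, ← zpow_add_one]
      · show (α ^ (k:ℤ)) (α y) = y * x₀ ^ ((k:ℤ)+1)
        rw [hαy, map_mul, ih.2, (hzfix (k:ℤ)).2, mul_assoc, ← zpow_add_one]
    | pred k ih =>
      rw [zpow_sub_one]
      constructor
      · show (α ^ (-k:ℤ)) (α⁻¹ x) = x * y₀ ^ ((-k:ℤ)-1)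
        rw [hinv_x, map_mul, ih.1, map_inv, (hzfix (-k:ℤ)).1, mul_assoc, ← zpow_sub_one]
      · show (α ^ (-k:ℤ)) (α⁻¹ y) = y * x₀ ^ ((-k:ℤ)-1)
        rw [hinv_y, map_mul, ih.2, map_inv, (hzfix (-k:ℤ)).2, mul_assoc, ← zpow_sub_one]
  have hzxy : ∀ i : ℤ, (α ^ i) (x * y⁻¹) = x * y⁻¹ * (y₀ * x₀⁻¹) ^ i := by
    intro i
    rw [map_mul, map_inv, (hzx i).1, (hzx i).2, mul_zpow, inv_zpow, mul_inv]
    simp [inv_zpow, mul_comm, mul_left_comm, mul_assoc]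
  -- reduction mod p
  have hredp : ∀ g : G, g ^ p = 1 → ∀ a : ℤ, g ^ a = g ^ (((a : ZMod p)).val : ℤ) := by
    intro g hg a
    rw [zpow_eq_zpow_iff_modEq]
    have h1 : a ≡ ((a : ZMod p).val : ℤ) [ZMOD (p:ℕ)] :=
      (ZMod.intCast_eq_intCast_iff _ _ _).mp
        (by push_cast; simp [ZMod.natCast_val, ZMod.cast_id])
    exact h1.of_dvd (Int.natCast_dvd_natCast.mpr (orderOf_dvd_of_pow_eq_one hg))
  have h3p : (y₀ * x₀⁻¹) ^ p = 1 := by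
    rw [mul_pow, hy₀p, inv_pow, hx₀p, inv_one, mul_one]
  -- difference key
  have keq : ∀ A B A' B' : ℤ, x ^ A * y ^ B = x ^ A' * y ^ B' →
      ((p:ℤ)^n ∣ A - A' ∧ (p:ℤ)^m ∣ B - B') := by
    intro A B A' B' h
    apply key
    calc x ^ (A - A') * y ^ (B - B') = (x ^ A / x ^ A') * (y ^ B / y ^ B') := by
          simp [zpow_sub, div_eq_mul_inv]
      _ = (x ^ A * y ^ B) / (x ^ A' * y ^ B') := by rw [div_mul_div_comm]
      _ = 1 := by rw [h, div_self']
  -- normal forms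
  have e0 : ∀ a : ℤ, x * y₀ ^ a = x ^ (1:ℤ) * y ^ ((p:ℤ)^(m-1) * a) := by
    intro a
    rw [hy₀, zpow_one, ← zpow_natCast y (p^(m-1)), ← zpow_mul]
    congr 2
  have e1 : ∀ a : ℤ, y * x₀ ^ a = x ^ ((p:ℤ)^(n-1) * a) * y ^ (1:ℤ) := by
    intro a
    rw [hx₀, zpow_one, ← zpow_natCast x (p^(n-1)), ← zpow_mul, mul_comm]
    congr 2
  have e2 : ∀ a : ℤ, x * y⁻¹ * (y₀ * x₀⁻¹) ^ a =
      x ^ (1 - (p:ℤ)^(n-1) * a) * y ^ ((p:ℤ)^(m-1) * a - 1) := by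
    intro a
    rw [hx₀, hy₀, mul_zpow, inv_zpow, ← zpow_natCast y (p^(m-1)),
      ← zpow_natCast x (p^(n-1)), ← zpow_mul, ← zpow_mul, zpow_sub, zpow_sub,
      zpow_one, zpow_one]
    have c1 : ((p^(m-1) : ℕ) : ℤ) * a = (p:ℤ)^(m-1) * a := by push_cast; ring
    have c2 : ((p^(n-1) : ℕ) : ℤ) * a = (p:ℤ)^(n-1) * a := by push_cast; ring
    rw [c1, c2]
    simp [div_eq_mul_inv, mul_comm, mul_left_comm, mul_assoc]
  -- divisibility helpers
  have hsplit : ∀ k : ℕ, 1 ≤ k → ((p:ℤ)^k = (p:ℤ)^(k-1) * p) := by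
    intro k hk
    rw [← pow_succ, Nat.sub_add_cancel hk]
  have hcancel : ∀ (k : ℕ), 1 ≤ k → ∀ c : ℤ, (p:ℤ)^k ∣ (p:ℤ)^(k-1) * c → (p:ℤ) ∣ c := by
    intro k hk c hc
    rw [hsplit k hk] at hc
    exact (mul_dvd_mul_iff_left (a := (p:ℤ)^(k-1)) (pow_ne_zero _ (by exact_mod_cast hp.ne_zero))).mp hc
  have hvalinj : ∀ i j : ZMod p, (p:ℤ) ∣ (i.val:ℤ) - (j.val:ℤ) → i = j := by
    intro i j h
    have h2 : (((i.val:ℤ) - (j.val:ℤ) : ℤ) : ZMod p) = 0 :=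
      (ZMod.intCast_zmod_eq_zero_iff_dvd _ _).mpr h
    push_cast at h2
    simpa [ZMod.natCast_val, ZMod.cast_id, sub_eq_zero] using h2
  have hnotp1 : ¬ ((p:ℤ) ∣ 1) := by
    intro h
    have h2 := Int.le_of_dvd one_pos h
    have := hp.two_le
    omega
  have hnotp2 : ¬ ((p:ℤ) ∣ 2) := by
    intro h
    have h2 := Int.le_of_dvd two_pos h
    have := hp.two_le
    obtain ⟨t, ht⟩ := hodd
    omega
  have hdvdP : ∀ k:ℕ, 2 ≤ k → ∀ c:ℤ, (p:ℤ) ∣ (p:ℤ)^(k-1) * c :=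
    fun k hk c => Dvd.dvd.mul_right (dvd_pow_self _ (by omega)) c
  have hdownm : ∀ c : ℤ, (p:ℤ)^m ∣ c → (p:ℤ) ∣ c :=
    fun c hc => dvd_trans (dvd_pow_self (p:ℤ) (by omega : m ≠ 0)) hc
  have hdownn : ∀ c : ℤ, (p:ℤ)^n ∣ c → (p:ℤ) ∣ c :=
    fun c hc => dvd_trans (dvd_pow_self (p:ℤ) (by omega : n ≠ 0)) hc
  set F : ZMod p × Fin 3 → G := fun ij =>
    ![x * y₀ ^ ((ij.1.val : ℤ)), y * x₀ ^ ((ij.1.val : ℤ)),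
      x * y⁻¹ * (y₀ * x₀⁻¹) ^ ((ij.1.val : ℤ))] ij.2 with hF
  have hSeq : {g : G | ∃ i : ℤ, g = (α ^ i) x ∨ g = (α ^ i) y ∨
      g = (α ^ i) (x * y⁻¹)} = Set.range F := by
    ext g
    simp only [Set.mem_setOf_eq, Set.mem_range]
    constructor
    · rintro ⟨i, (rfl | rfl | rfl)⟩
      · refine ⟨((i : ZMod p), 0), ?_⟩
        show x * y₀ ^ (((i : ZMod p)).val : ℤ) = (α ^ i) x
        rw [(hzx i).1, ← hredp y₀ hy₀p i]
      · refine ⟨((i : ZMod p), 1), ?_⟩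
        show y * x₀ ^ (((i : ZMod p)).val : ℤ) = (α ^ i) y
        rw [(hzx i).2, ← hredp x₀ hx₀p i]
      · refine ⟨((i : ZMod p), 2), ?_⟩
        show x * y⁻¹ * (y₀ * x₀⁻¹) ^ (((i : ZMod p)).val : ℤ) = (α ^ i) (x * y⁻¹)
        rw [hzxy i, ← hredp (y₀ * x₀⁻¹) h3p i]
    · rintro ⟨⟨i, j⟩, rfl⟩
      fin_cases j
      · exact ⟨(i.val : ℤ), Or.inl (by show x * y₀ ^ ((i.val:ℤ)) = (α ^ _) x; rw [(hzx _).1])⟩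
      · exact ⟨(i.val : ℤ), Or.inr (Or.inl (by
          show y * x₀ ^ ((i.val:ℤ)) = (α ^ _) y; rw [(hzx _).2]))⟩
      · exact ⟨(i.val : ℤ), Or.inr (Or.inr (by
          show x * y⁻¹ * (y₀ * x₀⁻¹) ^ ((i.val:ℤ)) = (α ^ _) (x * y⁻¹); rw [hzxy]))⟩
  have hFinj : Function.Injective F := by
    rintro ⟨i, j⟩ ⟨i', j'⟩ h
    set a : ℤ := (i.val : ℤ) with ha
    set b : ℤ := (i'.val : ℤ) with hb
    have hm1 : (1:ℕ) ≤ m - 1 := by omega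
    have hn1 : (1:ℕ) ≤ n - 1 := by omega
    fin_cases j <;> fin_cases j' <;>
      simp only [hF, Matrix.cons_val_zero, Matrix.cons_val_one, Matrix.head_cons,
        Prod.mk.injEq, Fin.mk.injEq, Fin.isValue] at h ⊢
    -- (0,0)
    · have h' := h
      rw [e0 a, e0 b] at h'
      obtain ⟨d1, d2⟩ := keq _ _ _ _ h'
      rw [← mul_sub] at d2
      exact ⟨hvalinj _ _ (hcancel m (by omega) _ d2), trivial⟩
    -- (0,1)
    · exfalso
      rw [e0 a, e1 b] at h
      obtain ⟨d1, d2⟩ := keq _ _ _ _ h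
      have hd := hdownm _ d2
      have h1 := hdvdP m (by omega) a
      have h2 : (p:ℤ) ∣ 1 := by
        have := h1.sub hd
        simpa using this
      exact hnotp1 h2
    -- (0,2)
    · exfalso
      rw [e0 a, e2 b] at h
      obtain ⟨d1, d2⟩ := keq _ _ _ _ h
      have hd := hdownm _ d2
      have h1 := hdvdP m (by omega) a
      have h2 := hdvdP m (by omega) b
      have h3 : (p:ℤ) ∣ 1 := by
        have h4 := (hd.add h2).sub h1
        have h5 : (p:ℤ)^(m-1) * a - ((p:ℤ)^(m-1) * b - 1) + (p:ℤ)^(m-1) * b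
            - (p:ℤ)^(m-1) * a = 1 := by ring
        rwa [h5] at h4
      exact hnotp1 h3
    -- (1,0)
    · exfalso
      rw [e1 a, e0 b] at h
      obtain ⟨d1, d2⟩ := keq _ _ _ _ h
      have hd := hdownm _ d2
      have h1 := hdvdP m (by omega) b
      have h2 : (p:ℤ) ∣ 1 := by
        have := hd.add h1
        simpa using this
      exact hnotp1 h2
    -- (1,1)
    · have h' := h
      rw [e1 a, e1 b] at h'
      obtain ⟨d1, d2⟩ := keq _ _ _ _ h'
      rw [← mul_sub] at d1
      exact ⟨hvalinj _ _ (hcancel n (by omega) _ d1), trivial⟩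
    -- (1,2)
    · exfalso
      rw [e1 a, e2 b] at h
      obtain ⟨d1, d2⟩ := keq _ _ _ _ h
      have hd := hdownm _ d2
      have h2 := hdvdP m (by omega) b
      have h3 : (p:ℤ) ∣ 2 := by
        have h4 := hd.add h2
        have h5 : 1 - ((p:ℤ)^(m-1) * b - 1) + (p:ℤ)^(m-1) * b = 2 := by ring
        rwa [h5] at h4
      exact hnotp2 h3
    -- (2,0)
    · exfalso
      rw [e2 a, e0 b] at h
      obtain ⟨d1, d2⟩ := keq _ _ _ _ h
      have hd := hdownm _ d2
      have h1 := hdvdP m (by omega) a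
      have h2 := hdvdP m (by omega) b
      have h3 : (p:ℤ) ∣ 1 := by
        have h4 := (h1.sub h2).sub hd
        have h5 : (p:ℤ)^(m-1) * a - (p:ℤ)^(m-1) * b
            - ((p:ℤ)^(m-1) * a - 1 - (p:ℤ)^(m-1) * b) = 1 := by ring
        rwa [h5] at h4
      exact hnotp1 h3
    -- (2,1)
    · exfalso
      rw [e2 a, e1 b] at h
      obtain ⟨d1, d2⟩ := keq _ _ _ _ h
      have hd := hdownm _ d2
      have h2 := hdvdP m (by omega) a
      have h3 : (p:ℤ) ∣ 2 := by
        have h4 := h2.sub hd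
        have h5 : (p:ℤ)^(m-1) * a - ((p:ℤ)^(m-1) * a - 1 - 1) = 2 := by ring
        rwa [h5] at h4
      exact hnotp2 h3
    -- (2,2)
    · have h' := h
      rw [e2 a, e2 b] at h'
      obtain ⟨d1, d2⟩ := keq _ _ _ _ h'
      have h5 : (1 - (p:ℤ)^(n-1) * a) - (1 - (p:ℤ)^(n-1) * b)
          = (p:ℤ)^(n-1) * (b - a) := by ring
      rw [h5] at d1
      have h6 := hcancel n (by omega) _ d1
      have h7 : (p:ℤ) ∣ a - b := by
        rw [show a - b = -(b - a) by ring]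
        exact h6.neg_right
      exact ⟨hvalinj _ _ h7, trivial⟩
  refine ⟨hα_x₀, hα_y₀, hnat, hordα, ?_⟩
  rw [hSeq, ← Nat.card_coe_set_eq, Nat.card_range_of_injective hFinj,
    Nat.card_prod, Nat.card_zmod]
  simp [Nat.card_eq_fintype_card, mul_comm]
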